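/- Fix integers n₁, n₂ ≥ 1, reals a₁, b₁, a₂, b₂, and an integer ℓ. Then there exist a constant C > 0 and a number κ ∈ [0,1) such that for all integers N ≥ 1 and all integers x₁, x₂ ≤ ℓ: |K₀(x₁,x₂)| ≤ C e^{(x₁−x₂)/2} e^{−|x₂−x₁|/4}, |K₁(x₁,x₂)| ≤ C e^{(x₁−x₂)/2} e^{(x₁+x₂)/4}, and |K^{(N)}(x₁,x₂)| ≤ C e^{(x₁−x₂)/2} e^{(x₁+x₂)/4} κ^N. -/

import Mathlib

open Complex MeasureTheory
open scoped Real

/-- `K₀(x₁,x₂)`: the first (diffusion) term of the finite-`N` flat-initial-condition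
PushASEP kernel, as a contour integral over the circle `|w| = ρ₀`, `0 < ρ₀ < 1`. -/
noncomputable def K0 (n₁ n₂ : ℕ) (a₁ b₁ a₂ b₂ ρ₀ : ℝ) (x₁ x₂ : ℤ) : ℂ :=
  (2 * (Real.pi : ℂ) * Complex.I)⁻¹ *
    ∮ w in C(0, ρ₀), w ^ (-(x₁ - x₂ + 1)) * (w / (1 - w)) ^ ((n₂ : ℤ) - n₁) *
      Complex.exp (((a₁ : ℂ) - a₂) * w + ((b₁ : ℂ) - b₂) / w)

/-- `K₁(x₁,x₂)`: the second (`N`-independent) term, a contour integral over the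
circle `|z − 1| = r₁`, `0 < r₁ < 1`. -/
noncomputable def K1 (n₁ n₂ : ℕ) (a₁ b₁ a₂ b₂ r₁ : ℝ) (x₁ x₂ : ℤ) : ℂ :=
  (2 * (Real.pi : ℂ) * Complex.I)⁻¹ *
    ∮ z in C(1, r₁),
      Complex.exp ((a₁ : ℂ) * (1 - z) + (b₁ : ℂ) / (1 - z) - (a₂ : ℂ) * z - (b₂ : ℂ) / z) *
        z ^ (x₂ + (n₂ : ℤ) + n₁) * (1 - z) ^ (-(x₁ + (n₁ : ℤ) + n₂ + 1))

/-- `K^{(N)}(x₁,x₂)`: the `N`-dependent term, a double contour integral over the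
circles `|z − 1| = r` (`0 < r < 1/2`) and `|w| = ρ` (`0 < ρ < min(r, 1−r)`). -/
noncomputable def KN (n₁ n₂ : ℕ) (a₁ b₁ a₂ b₂ r ρ : ℝ) (N : ℕ) (x₁ x₂ : ℤ) : ℂ :=
  (2 * (Real.pi : ℂ) * Complex.I)⁻¹ *
    ∮ z in C(1, r), (2 * (Real.pi : ℂ) * Complex.I)⁻¹ *
      ∮ w in C(0, ρ),
        Complex.exp ((a₁ : ℂ) * w + (b₁ : ℂ) / w - (a₂ : ℂ) * z - (b₂ : ℂ) / z) *
          (w - 1) ^ (n₁ + N) * (z - 1) ^ (-((n₂ : ℤ) + N)) *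
          z ^ (x₂ + (n₂ : ℤ) - N) * w ^ (-(x₁ + (n₁ : ℤ) - N + 1)) *
          (2 * z - 1) / ((w - z) * (w - 1 + z))

namespace Stmt12Helpers


/-! ### Numeric facts -/

lemma exp_m14_lb : (3/4 : ℝ) ≤ Real.exp (-(1/4)) := by
  have := Real.add_one_le_exp (-(1/4) : ℝ); linarith

lemma exp_m14_ub : Real.exp (-(1/4) : ℝ) ≤ 4/5 := by
  rw [show (-(1/4) : ℝ) = -(1/4) from rfl, Real.exp_neg]
  have h : (5/4 : ℝ) ≤ Real.exp (1/4) := by have := Real.add_one_le_exp (1/4 : ℝ); linarith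
  rw [show (4/5 : ℝ) = ((5/4 : ℝ))⁻¹ by norm_num]
  exact inv_anti₀ (by norm_num) h

lemma exp_m34_lb : (1/4 : ℝ) ≤ Real.exp (-(3/4)) := by
  have := Real.add_one_le_exp (-(3/4) : ℝ); linarith

lemma exp_m34_ub : Real.exp (-(3/4) : ℝ) ≤ 4/7 := by
  rw [Real.exp_neg]
  have h : (7/4 : ℝ) ≤ Real.exp (3/4) := by have := Real.add_one_le_exp (3/4 : ℝ); linarith
  rw [show (4/7 : ℝ) = ((7/4 : ℝ))⁻¹ by norm_num]
  exact inv_anti₀ (by norm_num) h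

lemma log8_ub : Real.log 8 ≤ 3 := by
  rw [Real.log_le_iff_le_exp (by norm_num)]
  have h1 : (2:ℝ) ≤ Real.exp 1 := by have := Real.add_one_le_exp (1:ℝ); linarith
  have : Real.exp 3 = Real.exp 1 * Real.exp 1 * Real.exp 1 := by
    rw [← Real.exp_add, ← Real.exp_add]; norm_num
  nlinarith [Real.exp_pos (1:ℝ)]

lemma log8_lb : (3/4 : ℝ) ≤ Real.log 8 := by
  rw [Real.le_log_iff_exp_le (by norm_num)]
  calc Real.exp (3/4) ≤ Real.exp 1 := by
        apply Real.exp_le_exp.mpr; norm_num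
    _ ≤ 8 := by have := Real.exp_one_lt_d9; linarith

lemma log4_ub : Real.log 4 ≤ 3 := by
  have := Real.log_le_log (by norm_num : (0:ℝ) < 4) (by norm_num : (4:ℝ) ≤ 8)
  linarith [log8_ub]

lemma log5_ub : Real.log 5 ≤ 2 := by
  rw [Real.log_le_iff_le_exp (by norm_num)]
  have h1 : Real.exp 2 = Real.exp 1 * Real.exp 1 := by rw [← Real.exp_add]; norm_num
  nlinarith [Real.exp_one_gt_d9, Real.exp_pos (1:ℝ)]

/-! ### zpow via exp -/

lemma zpow_eq_exp {q : ℝ} (hq : 0 < q) (k : ℤ) :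
    q ^ k = Real.exp ((k : ℝ) * Real.log q) := by
  rw [← Real.rpow_intCast q k, Real.rpow_def_of_pos hq, mul_comm]

lemma zpow_le_exp_abs {q lo hi L : ℝ} (hlo : 0 < lo) (h1 : lo ≤ q) (h2 : q ≤ hi)
    (hL1 : -L ≤ Real.log lo) (hL2 : Real.log hi ≤ L) (k : ℤ) :
    q ^ k ≤ Real.exp (|(k : ℝ)| * L) := by
  have hq : 0 < q := lt_of_lt_of_le hlo h1
  rw [zpow_eq_exp hq]
  apply Real.exp_le_exp.mpr
  have hLnn : 0 ≤ L := by
    have := Real.log_le_log hlo h1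
    have := Real.log_le_log hq h2
    linarith
  have hlog : |Real.log q| ≤ L := by
    rw [abs_le]
    constructor
    · linarith [Real.log_le_log hlo h1]
    · linarith [Real.log_le_log hq h2]
  calc (k : ℝ) * Real.log q ≤ |(k : ℝ) * Real.log q| := le_abs_self _
    _ = |(k : ℝ)| * |Real.log q| := abs_mul _ _
    _ ≤ |(k : ℝ)| * L := mul_le_mul_of_nonneg_left hlog (abs_nonneg _)

/-! ### Contour deformation -/

lemma deform {c : ℂ} {r R : ℝ} (hr : 0 < r) (hR : 0 < R) {f : ℂ → ℂ}
    (hd : ∀ z : ℂ, min r R ≤ dist z c → dist z c ≤ max r R → DifferentiableAt ℂ f z) :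
    (∮ z in C(c, R), f z) = ∮ z in C(c, r), f z := by
  rcases le_total r R with h | h
  · rw [min_eq_left h, max_eq_right h] at hd
    refine circleIntegral_eq_of_differentiable_on_annulus_off_countable hr h Set.countable_empty
      (fun z hz => ?_) (fun z hz => ?_)
    · exact (hd z (not_lt.mp fun hlt => hz.2 (Metric.mem_ball.mpr hlt))
        (Metric.mem_closedBall.mp hz.1)).continuousAt.continuousWithinAt
    · exact hd z (le_of_lt (not_le.mp fun hle => hz.1.2 (Metric.mem_closedBall.mpr hle)))
        (le_of_lt (Metric.mem_ball.mp hz.1.1))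
  · rw [min_eq_right h, max_eq_left h] at hd
    refine (circleIntegral_eq_of_differentiable_on_annulus_off_countable hR h Set.countable_empty
      (fun z hz => ?_) (fun z hz => ?_)).symm
    · exact (hd z (not_lt.mp fun hlt => hz.2 (Metric.mem_ball.mpr hlt))
        (Metric.mem_closedBall.mp hz.1)).continuousAt.continuousWithinAt
    · exact hd z (le_of_lt (not_le.mp fun hle => hz.1.2 (Metric.mem_closedBall.mpr hle)))
        (le_of_lt (Metric.mem_ball.mp hz.1.1))

/-! ### Norm bound for `(2πi)⁻¹ * ∮` -/

lemma norm_kernel_le {f : ℂ → ℂ} {c : ℂ} {R M : ℝ} (hR : 0 ≤ R)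
    (h : ∀ z ∈ Metric.sphere c R, ‖f z‖ ≤ M) :
    ‖(2 * (Real.pi : ℂ) * Complex.I)⁻¹ * ∮ z in C(c, R), f z‖ ≤ R * M := by
  rw [← smul_eq_mul]
  exact circleIntegral.norm_two_pi_i_inv_smul_integral_le_of_norm_le_const hR h


lemma circle_swap {c₁ c₂ : ℂ} {R₁ R₂ : ℝ} {f : ℂ → ℂ → ℂ}
    (hf : Continuous fun p : ℝ × ℝ => f (circleMap c₁ R₁ p.1) (circleMap c₂ R₂ p.2)) :
    (∮ z in C(c₁, R₁), ∮ w in C(c₂, R₂), f z w)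
      = ∮ w in C(c₂, R₂), ∮ z in C(c₁, R₁), f z w := by
  have h2π : (0:ℝ) ≤ 2 * π := by positivity
  set G : ℝ → ℝ → ℂ := fun θ φ =>
    deriv (circleMap c₁ R₁) θ • deriv (circleMap c₂ R₂) φ •
      f (circleMap c₁ R₁ θ) (circleMap c₂ R₂ φ) with hG
  have hGc : Continuous fun p : ℝ × ℝ => G p.1 p.2 := by
    simp only [hG, deriv_circleMap]
    exact (((continuous_circleMap 0 R₁).comp continuous_fst).mul continuous_const).smul
      ((((continuous_circleMap 0 R₂).comp continuous_snd).mul continuous_const).smul hf)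
  have hGi : Integrable (Function.uncurry G)
      ((volume.restrict (Set.Ioc 0 (2*π))).prod (volume.restrict (Set.Ioc 0 (2*π)))) := by
    rw [Measure.prod_restrict]
    exact ((hGc.continuousOn).integrableOn_compact (isCompact_Icc.prod isCompact_Icc)).mono_set
      (Set.prod_mono Set.Ioc_subset_Icc_self Set.Ioc_subset_Icc_self)
  calc (∮ z in C(c₁, R₁), ∮ w in C(c₂, R₂), f z w)
      = ∫ θ in Set.Ioc 0 (2*π), ∫ φ in Set.Ioc 0 (2*π), G θ φ := by
        simp only [circleIntegral]
        rw [intervalIntegral.integral_of_le h2π]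
        refine integral_congr_ae (Filter.Eventually.of_forall fun θ => ?_)
        beta_reduce
        rw [intervalIntegral.integral_of_le h2π, ← integral_smul]
    _ = ∫ φ in Set.Ioc 0 (2*π), ∫ θ in Set.Ioc 0 (2*π), G θ φ := integral_integral_swap hGi
    _ = ∮ w in C(c₂, R₂), ∮ z in C(c₁, R₁), f z w := by
        symm
        simp only [circleIntegral]
        rw [intervalIntegral.integral_of_le h2π]
        refine integral_congr_ae (Filter.Eventually.of_forall fun φ => ?_)
        beta_reduce
        rw [intervalIntegral.integral_of_le h2π, ← integral_smul]
        exact integral_congr_ae (Filter.Eventually.of_forall fun θ => smul_comm _ _ _)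



lemma K0_bd (n₁ n₂ : ℕ) (a₁ b₁ a₂ b₂ : ℝ) :
    ∃ C > (0:ℝ), ∀ ρ₀ : ℝ, 0 < ρ₀ → ρ₀ < 1 → ∀ x₁ x₂ : ℤ,
      ‖K0 n₁ n₂ a₁ b₁ a₂ b₂ ρ₀ x₁ x₂‖ ≤
        C * Real.exp (((x₁:ℝ) - x₂)/2) * Real.exp (-|(x₂:ℝ) - x₁|/4) := by
  set E : ℝ := |a₁ - a₂| + |b₁ - b₂| * Real.exp (3/4) with hE
  refine ⟨Real.exp (|(n₂:ℝ) - (n₁:ℝ)| * 3 + E), Real.exp_pos _, ?_⟩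
  intro ρ₀ h0 h1 x₁ x₂
  set u : ℝ := if 0 ≤ x₁ - x₂ then Real.exp (-(1/4)) else Real.exp (-(3/4)) with hu
  have hue : Real.exp (-(3/4)) ≤ u := by
    rw [hu]; split_ifs
    · exact Real.exp_le_exp.mpr (by norm_num)
    · exact le_rfl
  have huu : u ≤ 4/5 := by
    rw [hu]; split_ifs
    · exact exp_m14_ub
    · linarith [exp_m34_ub]
  have hul : (1/4:ℝ) ≤ u := le_trans exp_m34_lb hue
  have hu0 : (0:ℝ) < u := by linarith
  have hu1 : u < 1 := by linarith
  -- the chosen radius realizes the decay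
  have key : u ^ (-(x₁ - x₂)) = Real.exp (((x₁:ℝ) - x₂)/2 - |(x₂:ℝ) - x₁|/4) := by
    rw [zpow_eq_exp hu0, hu]
    split_ifs with h
    · have hx : ((x₂:ℝ) - x₁) ≤ 0 := by
        have : (x₂:ℝ) ≤ x₁ := by exact_mod_cast (by linarith [h] : x₂ ≤ x₁)
        linarith
      rw [Real.log_exp, _root_.abs_of_nonpos hx]
      congr 1
      push_cast
      ring
    · have hx : (0:ℝ) ≤ (x₂:ℝ) - x₁ := by
        have : (x₁:ℝ) ≤ x₂ := by exact_mod_cast (by omega : x₁ ≤ x₂)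
        linarith
      rw [Real.log_exp, _root_.abs_of_nonneg hx]
      congr 1
      push_cast
      ring
  have hK : K0 n₁ n₂ a₁ b₁ a₂ b₂ ρ₀ x₁ x₂ = K0 n₁ n₂ a₁ b₁ a₂ b₂ u x₁ x₂ := by
    simp only [K0]
    congr 1
    refine deform hu0 h0 (fun w hmin hmax => ?_)
    rw [dist_zero_right] at hmin hmax
    have hw0 : w ≠ 0 := by
      intro h
      rw [h, norm_zero] at hmin
      have : (0:ℝ) < min u ρ₀ := lt_min hu0 h0
      linarith
    have hw1 : (1:ℂ) - w ≠ 0 := by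
      intro h
      have : w = 1 := by linear_combination -h
      rw [this, norm_one] at hmax
      have : max u ρ₀ < 1 := max_lt hu1 h1
      linarith
    have h₁ : DifferentiableAt ℂ (fun w : ℂ => w ^ (-(x₁ - x₂ + 1))) w :=
      differentiableAt_zpow.mpr (Or.inl hw0)
    have h₂ : DifferentiableAt ℂ (fun w : ℂ => (w / (1 - w)) ^ ((n₂:ℤ) - n₁)) w :=
      DifferentiableAt.zpow
        (differentiableAt_id.div ((differentiableAt_const 1).sub differentiableAt_id) hw1)
        (Or.inl (div_ne_zero hw0 hw1))
    have h₃ : DifferentiableAt ℂ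
        (fun w : ℂ => Complex.exp (((a₁:ℂ) - a₂) * w + ((b₁:ℂ) - b₂) / w)) w :=
      DifferentiableAt.cexp
        (((differentiableAt_const _).mul differentiableAt_id).add
          ((differentiableAt_const _).div differentiableAt_id hw0))
    exact (h₁.mul h₂).mul h₃
  rw [hK]
  simp only [K0]
  have hM : ∀ w ∈ Metric.sphere (0:ℂ) u,
      ‖w ^ (-(x₁ - x₂ + 1)) * (w / (1 - w)) ^ ((n₂:ℤ) - n₁) *
        Complex.exp (((a₁:ℂ) - a₂) * w + ((b₁:ℂ) - b₂) / w)‖ ≤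
      u ^ (-(x₁ - x₂ + 1)) * Real.exp (|(n₂:ℝ) - (n₁:ℝ)| * 3 + E) := by
    intro w hw
    rw [mem_sphere_zero_iff_norm] at hw
    have hw0 : w ≠ 0 := by intro h; rw [h, norm_zero] at hw; linarith
    have h1w_lb : 1 - u ≤ ‖1 - w‖ := by
      have := norm_sub_norm_le (1:ℂ) w
      rw [norm_one, hw] at this
      linarith
    have h1w_ub : ‖1 - w‖ ≤ 1 + u := by
      have := norm_sub_le (1:ℂ) w
      rw [norm_one, hw] at this
      linarith
    have h1w_pos : (0:ℝ) < ‖1 - w‖ := by linarith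
    have hq_lb : (1/8:ℝ) ≤ ‖w / (1 - w)‖ := by
      rw [norm_div, hw, le_div_iff₀ h1w_pos]
      nlinarith
    have hq_ub : ‖w / (1 - w)‖ ≤ 4 := by
      rw [norm_div, hw, div_le_iff₀ h1w_pos]
      nlinarith
    have hqpow : ‖w / (1 - w)‖ ^ ((n₂:ℤ) - n₁) ≤ Real.exp (|(n₂:ℝ) - (n₁:ℝ)| * 3) := by
      have h8 : -(3:ℝ) ≤ Real.log (1/8) := by
        rw [show (1/8:ℝ) = 8⁻¹ by norm_num, Real.log_inv]
        linarith [log8_ub]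
      have := zpow_le_exp_abs (by norm_num : (0:ℝ) < 1/8) hq_lb hq_ub h8 log4_ub
        ((n₂:ℤ) - n₁)
      convert this using 3
      push_cast
      ring
    have hexp : ‖Complex.exp (((a₁:ℂ) - a₂) * w + ((b₁:ℂ) - b₂) / w)‖ ≤ Real.exp E := by
      rw [Complex.norm_exp]
      apply Real.exp_le_exp.mpr
      have hre : (((a₁:ℂ) - a₂) * w + ((b₁:ℂ) - b₂) / w).re ≤
          ‖((a₁:ℂ) - a₂) * w + ((b₁:ℂ) - b₂) / w‖ := Complex.re_le_norm _
      have hnorm : ‖((a₁:ℂ) - a₂) * w + ((b₁:ℂ) - b₂) / w‖ ≤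
          |a₁ - a₂| * u + |b₁ - b₂| / u := by
        refine (norm_add_le _ _).trans ?_
        rw [norm_mul, norm_div, hw]
        have e1 : ((a₁:ℂ) - a₂) = ((a₁ - a₂ : ℝ) : ℂ) := by push_cast; ring
        have e2 : ((b₁:ℂ) - b₂) = ((b₁ - b₂ : ℝ) : ℂ) := by push_cast; ring
        rw [e1, e2, Complex.norm_real, Complex.norm_real, Real.norm_eq_abs, Real.norm_eq_abs]
      have hinvu : 1/u ≤ Real.exp (3/4) := by
        rw [div_le_iff₀ hu0]
        have h2 : Real.exp (-(3/4):ℝ) * Real.exp (3/4) = 1 := by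
          rw [← Real.exp_add]; norm_num
        nlinarith [Real.exp_pos ((3:ℝ)/4), hue]
      have : |b₁ - b₂| / u ≤ |b₁ - b₂| * Real.exp (3/4) := by
        rw [div_eq_mul_inv]
        have : u⁻¹ ≤ Real.exp (3/4) := by
          rw [← one_div]; exact hinvu
        exact mul_le_mul_of_nonneg_left this (abs_nonneg _)
      have : |a₁ - a₂| * u ≤ |a₁ - a₂| := by
        nlinarith [abs_nonneg (a₁ - a₂)]
      rw [hE]
      nlinarith [abs_nonneg (a₁ - a₂), abs_nonneg (b₁ - b₂), Real.exp_pos (3/4:ℝ),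
        mul_le_mul_of_nonneg_left (show u ≤ 1 by linarith) (abs_nonneg (a₁ - a₂)),
        hre, hnorm]
    calc ‖w ^ (-(x₁ - x₂ + 1)) * (w / (1 - w)) ^ ((n₂:ℤ) - n₁) *
        Complex.exp (((a₁:ℂ) - a₂) * w + ((b₁:ℂ) - b₂) / w)‖
        = u ^ (-(x₁ - x₂ + 1)) * (‖w / (1 - w)‖ ^ ((n₂:ℤ) - n₁) *
            ‖Complex.exp (((a₁:ℂ) - a₂) * w + ((b₁:ℂ) - b₂) / w)‖) := by
          rw [norm_mul, norm_mul, norm_zpow, norm_zpow, hw]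
          ring
      _ ≤ u ^ (-(x₁ - x₂ + 1)) * (Real.exp (|(n₂:ℝ) - (n₁:ℝ)| * 3) * Real.exp E) := by
          refine mul_le_mul_of_nonneg_left ?_ (zpow_nonneg hu0.le _)
          exact mul_le_mul hqpow hexp (norm_nonneg _) (Real.exp_nonneg _)
      _ = u ^ (-(x₁ - x₂ + 1)) * Real.exp (|(n₂:ℝ) - (n₁:ℝ)| * 3 + E) := by
          simp only [hE, Real.exp_add]
  refine (norm_kernel_le hu0.le hM).trans ?_
  have huz : u * (u ^ (-(x₁ - x₂ + 1)) * Real.exp (|(n₂:ℝ) - (n₁:ℝ)| * 3 + E)) =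
      u ^ (-(x₁ - x₂)) * Real.exp (|(n₂:ℝ) - (n₁:ℝ)| * 3 + E) := by
    rw [← mul_assoc]
    congr 1
    rw [show u * u ^ (-(x₁ - x₂ + 1)) = u ^ (1:ℤ) * u ^ (-(x₁ - x₂ + 1)) by rw [zpow_one],
      ← zpow_add₀ (ne_of_gt hu0)]
    congr 1
    ring
  rw [huz, key, ← Real.exp_add, mul_assoc, ← Real.exp_add, mul_comm, ← Real.exp_add]
  apply Real.exp_le_exp.mpr
  ring_nf
  exact le_rfl

set_option maxHeartbeats 2000000 in
lemma K1_bd (n₁ n₂ : ℕ) (a₁ b₁ a₂ b₂ : ℝ) (ℓ : ℤ) :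
    ∃ C > (0:ℝ), ∀ r₁ : ℝ, 0 < r₁ → r₁ < 1 → ∀ x₁ x₂ : ℤ, x₁ ≤ ℓ → x₂ ≤ ℓ →
      ‖K1 n₁ n₂ a₁ b₁ a₂ b₂ r₁ x₁ x₂‖ ≤
        C * Real.exp (((x₁:ℝ) - x₂)/2) * Real.exp (((x₁:ℝ) + x₂)/4) := by
  set t : ℝ := Real.exp (-(1/4)) with ht
  set s : ℝ := 1 - t with hs
  have htlb : (3/4:ℝ) ≤ t := exp_m14_lb
  have htub : t ≤ 4/5 := exp_m14_ub
  have hslb : (1/5:ℝ) ≤ s := by rw [hs]; linarith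
  have hsub : s ≤ 1/4 := by rw [hs]; linarith
  have hs0 : (0:ℝ) < s := by linarith
  have hs1 : s < 1 := by linarith
  set E₁ : ℝ := |a₁| + |b₁| * 5 + 2*|a₂| + |b₂| * Real.exp (1/4) with hE₁
  set c₁ : ℝ := |(ℓ:ℝ)| + ((n₁:ℝ)+n₂) + |(ℓ:ℝ)|/4 + ((n₁:ℝ)+n₂)/4 + 1 with hc₁
  set c₂ : ℝ := 2*((n₁:ℝ)+n₂+1) + 2*|(ℓ:ℝ)| + 1 with hc₂
  refine ⟨Real.exp (E₁ + c₁ + c₂), Real.exp_pos _, ?_⟩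
  intro r₁ h0 h1 x₁ x₂ hx₁ hx₂
  have hx₁' : (x₁:ℝ) ≤ |(ℓ:ℝ)| := le_trans (by exact_mod_cast hx₁) (le_abs_self _)
  have hx₂' : (x₂:ℝ) ≤ |(ℓ:ℝ)| := le_trans (by exact_mod_cast hx₂) (le_abs_self _)
  have habs : (0:ℝ) ≤ |(ℓ:ℝ)| := abs_nonneg _
  -- log bounds for s
  have hlogs_ub : Real.log s ≤ -(3/4) := by
    rw [Real.log_le_iff_le_exp hs0]
    linarith [exp_m34_lb]
  have hlogs_lb : -(2:ℝ) ≤ Real.log s := by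
    rw [Real.le_log_iff_exp_le hs0]
    have h2 : Real.exp (2:ℝ) = Real.exp 1 * Real.exp 1 := by rw [← Real.exp_add]; norm_num
    have h5 : (5:ℝ) ≤ Real.exp 2 := by nlinarith [Real.exp_one_gt_d9]
    have : Real.exp (-(2:ℝ)) * Real.exp 2 = 1 := by rw [← Real.exp_add]; norm_num
    nlinarith [Real.exp_pos (2:ℝ)]
  -- contour deformation
  have hK : K1 n₁ n₂ a₁ b₁ a₂ b₂ r₁ x₁ x₂ = K1 n₁ n₂ a₁ b₁ a₂ b₂ s x₁ x₂ := by
    simp only [K1]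
    congr 1
    refine (deform h0 hs0 (fun z hmin hmax => ?_)).symm
    have hzmin : (0:ℝ) < min r₁ s := lt_min h0 hs0
    have hzmax : max r₁ s < 1 := max_lt h1 hs1
    have hz1 : (1:ℂ) - z ≠ 0 := by
      intro h
      have hz : z = 1 := by linear_combination -h
      rw [hz, dist_self] at hmin
      linarith
    have hz1' : z ≠ 1 := fun h => hz1 (by rw [h]; ring)
    have hz0 : z ≠ 0 := by
      intro h
      rw [h] at hmax
      have : dist (0:ℂ) 1 = 1 := by simp
      rw [this] at hmax
      linarith
    have hd1 : DifferentiableAt ℂ (fun z : ℂ =>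
        Complex.exp ((a₁:ℂ) * (1 - z) + (b₁:ℂ) / (1 - z) - (a₂:ℂ) * z - (b₂:ℂ) / z)) z := by
      refine DifferentiableAt.cexp ?_
      have d1 : DifferentiableAt ℂ (fun z : ℂ => (a₁:ℂ) * (1 - z)) z :=
        (differentiableAt_const _).mul ((differentiableAt_const 1).sub differentiableAt_id)
      have d2 : DifferentiableAt ℂ (fun z : ℂ => (b₁:ℂ) / (1 - z)) z :=
        (differentiableAt_const _).div ((differentiableAt_const 1).sub differentiableAt_id) hz1
      have d3 : DifferentiableAt ℂ (fun z : ℂ => (a₂:ℂ) * z) z :=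
        (differentiableAt_const _).mul differentiableAt_id
      have d4 : DifferentiableAt ℂ (fun z : ℂ => (b₂:ℂ) / z) z :=
        (differentiableAt_const _).div differentiableAt_id hz0
      exact ((d1.add d2).sub d3).sub d4
    have hd2 : DifferentiableAt ℂ (fun z : ℂ => z ^ (x₂ + (n₂:ℤ) + n₁)) z :=
      differentiableAt_zpow.mpr (Or.inl hz0)
    have hd3 : DifferentiableAt ℂ (fun z : ℂ => (1 - z) ^ (-(x₁ + (n₁:ℤ) + n₂ + 1))) z :=
      DifferentiableAt.zpow ((differentiableAt_const 1).sub differentiableAt_id) (Or.inl hz1)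
    exact (hd1.mul hd2).mul hd3
  rw [hK]
  simp only [K1]
  have hM : ∀ z ∈ Metric.sphere (1:ℂ) s,
      ‖Complex.exp ((a₁:ℂ) * (1 - z) + (b₁:ℂ) / (1 - z) - (a₂:ℂ) * z - (b₂:ℂ) / z) *
        z ^ (x₂ + (n₂:ℤ) + n₁) * (1 - z) ^ (-(x₁ + (n₁:ℤ) + n₂ + 1))‖ ≤
      Real.exp E₁ * (Real.exp (-(x₂:ℝ)/4 + c₁) * Real.exp (3*(x₁:ℝ)/4 + c₂)) := by
    intro z hz
    rw [Metric.mem_sphere, dist_eq_norm] at hz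
    have h1z : ‖(1:ℂ) - z‖ = s := by rw [norm_sub_rev]; exact hz
    have h1z_pos : (0:ℝ) < ‖(1:ℂ) - z‖ := by rw [h1z]; linarith
    have hznorm_lb : t ≤ ‖z‖ := by
      have ha := norm_sub_norm_le (1:ℂ) z
      rw [norm_one, h1z] at ha
      have hseq : s = 1 - t := hs
      linarith
    have hznorm_ub : ‖z‖ ≤ 2 - t := by
      have hb := norm_sub_norm_le z (1:ℂ)
      rw [norm_one, hz] at hb
      have hseq : s = 1 - t := hs
      linarith
    have hz_pos : (0:ℝ) < ‖z‖ := by linarith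
    -- log bounds for ‖z‖
    have hlz_lb : -(1/4:ℝ) ≤ Real.log ‖z‖ := by
      have := Real.log_le_log (Real.exp_pos _) hznorm_lb
      rw [Real.log_exp] at this
      linarith
    have hlz_ub : Real.log ‖z‖ ≤ 1 := by
      have h2 : (2:ℝ) ≤ Real.exp 1 := by have := Real.add_one_le_exp (1:ℝ); linarith
      rw [Real.log_le_iff_le_exp hz_pos]
      linarith
    -- factor 1 : exponential
    have hF1 : ‖Complex.exp ((a₁:ℂ) * (1 - z) + (b₁:ℂ) / (1 - z) - (a₂:ℂ) * z - (b₂:ℂ) / z)‖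
        ≤ Real.exp E₁ := by
      rw [Complex.norm_exp]
      apply Real.exp_le_exp.mpr
      have hre := Complex.re_le_norm ((a₁:ℂ) * (1 - z) + (b₁:ℂ) / (1 - z) - (a₂:ℂ) * z - (b₂:ℂ) / z)
      have hn1 : ‖(a₁:ℂ) * (1 - z)‖ = |a₁| * ‖(1:ℂ) - z‖ := by
        rw [norm_mul, Complex.norm_real, Real.norm_eq_abs]
      have hn2 : ‖(b₁:ℂ) / (1 - z)‖ = |b₁| / ‖(1:ℂ) - z‖ := by
        rw [norm_div, Complex.norm_real, Real.norm_eq_abs]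
      have hn3 : ‖(a₂:ℂ) * z‖ = |a₂| * ‖z‖ := by
        rw [norm_mul, Complex.norm_real, Real.norm_eq_abs]
      have hn4 : ‖(b₂:ℂ) / z‖ = |b₂| / ‖z‖ := by
        rw [norm_div, Complex.norm_real, Real.norm_eq_abs]
      have htri : ‖(a₁:ℂ) * (1 - z) + (b₁:ℂ) / (1 - z) - (a₂:ℂ) * z - (b₂:ℂ) / z‖ ≤
          |a₁| * ‖(1:ℂ) - z‖ + |b₁| / ‖(1:ℂ) - z‖ + |a₂| * ‖z‖ + |b₂| / ‖z‖ := by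
        calc ‖(a₁:ℂ) * (1 - z) + (b₁:ℂ) / (1 - z) - (a₂:ℂ) * z - (b₂:ℂ) / z‖
            ≤ ‖(a₁:ℂ) * (1 - z) + (b₁:ℂ) / (1 - z) - (a₂:ℂ) * z‖ + ‖(b₂:ℂ) / z‖ :=
              norm_sub_le _ _
          _ ≤ ‖(a₁:ℂ) * (1 - z) + (b₁:ℂ) / (1 - z)‖ + ‖(a₂:ℂ) * z‖ + ‖(b₂:ℂ) / z‖ := by
              have := norm_sub_le ((a₁:ℂ) * (1 - z) + (b₁:ℂ) / (1 - z)) ((a₂:ℂ) * z)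
              linarith
          _ ≤ ‖(a₁:ℂ) * (1 - z)‖ + ‖(b₁:ℂ) / (1 - z)‖ + ‖(a₂:ℂ) * z‖ + ‖(b₂:ℂ) / z‖ := by
              have := norm_add_le ((a₁:ℂ) * (1 - z)) ((b₁:ℂ) / (1 - z))
              linarith
          _ = |a₁| * ‖(1:ℂ) - z‖ + |b₁| / ‖(1:ℂ) - z‖ + |a₂| * ‖z‖ + |b₂| / ‖z‖ := by
              rw [hn1, hn2, hn3, hn4]
      have hb1 : |b₁| / ‖(1:ℂ) - z‖ ≤ |b₁| * 5 := by
        rw [h1z, div_le_iff₀ hs0]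
        nlinarith [mul_le_mul_of_nonneg_left (show (1:ℝ) ≤ 5*s by linarith) (abs_nonneg b₁)]
      have hb2 : |b₂| / ‖z‖ ≤ |b₂| * Real.exp (1/4) := by
        have h7 : |b₂| / ‖z‖ ≤ |b₂| / t := by
          exact div_le_div_of_nonneg_left (abs_nonneg _) (by linarith) hznorm_lb
        have h8 : |b₂| / t = |b₂| * Real.exp (1/4) := by
          rw [ht, Real.exp_neg, div_inv_eq_mul]
        linarith
      have ha1 : |a₁| * ‖(1:ℂ) - z‖ ≤ |a₁| := by
        rw [h1z]
        nlinarith [mul_le_mul_of_nonneg_left (show s ≤ (1:ℝ) by linarith) (abs_nonneg a₁)]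
      have ha2 : |a₂| * ‖z‖ ≤ 2 * |a₂| := by
        nlinarith [mul_le_mul_of_nonneg_left (show ‖z‖ ≤ (2:ℝ) by linarith) (abs_nonneg a₂)]
      rw [hE₁]
      linarith
    -- factor 2 : z ^ p
    have hF2 : ‖z ^ (x₂ + (n₂:ℤ) + n₁)‖ ≤ Real.exp (-(x₂:ℝ)/4 + c₁) := by
      rw [norm_zpow, zpow_eq_exp hz_pos]
      apply Real.exp_le_exp.mpr
      have hcast : ((x₂ + (n₂:ℤ) + n₁ : ℤ) : ℝ) = (x₂:ℝ) + n₂ + n₁ := by push_cast; ring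
      rw [hcast]
      have hn1r : (0:ℝ) ≤ (n₁:ℝ) := Nat.cast_nonneg _
      have hn2r : (0:ℝ) ≤ (n₂:ℝ) := Nat.cast_nonneg _
      rcases le_or_gt 0 ((x₂:ℝ) + n₂ + n₁) with hP | hP
      · have h5 := mul_le_mul_of_nonneg_left hlz_ub hP
        rw [mul_one] at h5
        rw [hc₁]
        linarith
      · have h5 := mul_le_mul_of_nonpos_left hlz_lb hP.le
        rw [hc₁]
        linarith
    -- factor 3 : (1-z) ^ q
    have hF3 : ‖(1 - z) ^ (-(x₁ + (n₁:ℤ) + n₂ + 1))‖ ≤ Real.exp (3*(x₁:ℝ)/4 + c₂) := by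
      rw [norm_zpow, h1z, zpow_eq_exp hs0]
      apply Real.exp_le_exp.mpr
      have hcast : ((-(x₁ + (n₁:ℤ) + n₂ + 1) : ℤ) : ℝ) = -((x₁:ℝ) + n₁ + n₂ + 1) := by
        push_cast; ring
      rw [hcast]
      have hn1r : (0:ℝ) ≤ (n₁:ℝ) := Nat.cast_nonneg _
      have hn2r : (0:ℝ) ≤ (n₂:ℝ) := Nat.cast_nonneg _
      rcases le_or_gt 0 (-((x₁:ℝ) + n₁ + n₂ + 1)) with hQ | hQ
      · have h5 := mul_le_mul_of_nonneg_left hlogs_ub hQ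
        rw [hc₂]
        linarith
      · have h5 := mul_le_mul_of_nonpos_left hlogs_lb hQ.le
        rw [hc₂]
        linarith
    calc ‖Complex.exp ((a₁:ℂ) * (1 - z) + (b₁:ℂ) / (1 - z) - (a₂:ℂ) * z - (b₂:ℂ) / z) *
        z ^ (x₂ + (n₂:ℤ) + n₁) * (1 - z) ^ (-(x₁ + (n₁:ℤ) + n₂ + 1))‖
        = ‖Complex.exp ((a₁:ℂ) * (1 - z) + (b₁:ℂ) / (1 - z) - (a₂:ℂ) * z - (b₂:ℂ) / z)‖ *
          (‖z ^ (x₂ + (n₂:ℤ) + n₁)‖ * ‖(1 - z) ^ (-(x₁ + (n₁:ℤ) + n₂ + 1))‖) := by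
          rw [norm_mul, norm_mul]; ring
      _ ≤ Real.exp E₁ * (Real.exp (-(x₂:ℝ)/4 + c₁) * Real.exp (3*(x₁:ℝ)/4 + c₂)) := by
          refine mul_le_mul hF1 ?_ (by positivity) (Real.exp_nonneg _)
          exact mul_le_mul hF2 hF3 (norm_nonneg _) (Real.exp_nonneg _)
  refine (norm_kernel_le hs0.le hM).trans ?_
  have h9 : Real.exp E₁ * (Real.exp (-(x₂:ℝ)/4 + c₁) * Real.exp (3*(x₁:ℝ)/4 + c₂)) =
      Real.exp (E₁ + c₁ + c₂) * Real.exp (((x₁:ℝ) - x₂)/2) * Real.exp (((x₁:ℝ) + x₂)/4) := by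
    rw [← Real.exp_add, ← Real.exp_add, ← Real.exp_add, ← Real.exp_add]
    congr 1
    ring
  calc s * (Real.exp E₁ * (Real.exp (-(x₂:ℝ)/4 + c₁) * Real.exp (3*(x₁:ℝ)/4 + c₂)))
      ≤ 1 * (Real.exp E₁ * (Real.exp (-(x₂:ℝ)/4 + c₁) * Real.exp (3*(x₁:ℝ)/4 + c₂))) :=
        mul_le_mul_of_nonneg_right (by linarith) (by positivity)
    _ = Real.exp (E₁ + c₁ + c₂) * Real.exp (((x₁:ℝ) - x₂)/2) * Real.exp (((x₁:ℝ) + x₂)/4) := by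
        rw [one_mul, h9]

noncomputable def Phi (a₁ b₁ a₂ b₂ : ℝ) (n₁ n₂ N : ℕ) (x₁ x₂ : ℤ) (z w : ℂ) : ℂ :=
  Complex.exp ((a₁ : ℂ) * w + (b₁ : ℂ) / w - (a₂ : ℂ) * z - (b₂ : ℂ) / z) *
    (w - 1) ^ (n₁ + N) * (z - 1) ^ (-((n₂ : ℤ) + N)) *
    z ^ (x₂ + (n₂ : ℤ) - N) * w ^ (-(x₁ + (n₁ : ℤ) - N + 1)) *
    (2 * z - 1) / ((w - z) * (w - 1 + z))

lemma Phi_diffW (a₁ b₁ a₂ b₂ : ℝ) (n₁ n₂ N : ℕ) (x₁ x₂ : ℤ) (z w : ℂ)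
    (hw0 : w ≠ 0) (hwz : w ≠ z) (hw1z : w - 1 + z ≠ 0) :
    DifferentiableAt ℂ (fun w => Phi a₁ b₁ a₂ b₂ n₁ n₂ N x₁ x₂ z w) w := by
  have hexp : DifferentiableAt ℂ (fun w : ℂ =>
      Complex.exp ((a₁ : ℂ) * w + (b₁ : ℂ) / w - (a₂ : ℂ) * z - (b₂ : ℂ) / z)) w := by
    refine DifferentiableAt.cexp ?_
    exact ((((differentiableAt_const _).mul differentiableAt_id).add
      ((differentiableAt_const _).div differentiableAt_id hw0)).sub
      (differentiableAt_const _)).sub (differentiableAt_const _)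
  have h2 : DifferentiableAt ℂ (fun w : ℂ => (w - 1) ^ (n₁ + N)) w :=
    (differentiableAt_id.sub (differentiableAt_const 1)).pow _
  have h5 : DifferentiableAt ℂ (fun w : ℂ => w ^ (-(x₁ + (n₁ : ℤ) - N + 1))) w :=
    differentiableAt_zpow.mpr (Or.inl hw0)
  have h7 : DifferentiableAt ℂ (fun w : ℂ => (w - z) * (w - 1 + z)) w :=
    (differentiableAt_id.sub (differentiableAt_const _)).mul
      ((differentiableAt_id.sub (differentiableAt_const 1)).add (differentiableAt_const _))
  have h7ne : (w - z) * (w - 1 + z) ≠ 0 := mul_ne_zero (sub_ne_zero.mpr hwz) hw1z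
  exact DifferentiableAt.div
    ((((((hexp.mul h2).mul (differentiableAt_const _)).mul
      (differentiableAt_const _)).mul h5).mul (differentiableAt_const _))) h7 h7ne

lemma Phi_diffZ (a₁ b₁ a₂ b₂ : ℝ) (n₁ n₂ N : ℕ) (x₁ x₂ : ℤ) (z w : ℂ)
    (hz0 : z ≠ 0) (hz1 : z ≠ 1) (hwz : w ≠ z) (hw1z : w - 1 + z ≠ 0) :
    DifferentiableAt ℂ (fun z => Phi a₁ b₁ a₂ b₂ n₁ n₂ N x₁ x₂ z w) z := by
  have hexp : DifferentiableAt ℂ (fun z : ℂ =>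
      Complex.exp ((a₁ : ℂ) * w + (b₁ : ℂ) / w - (a₂ : ℂ) * z - (b₂ : ℂ) / z)) z := by
    refine DifferentiableAt.cexp ?_
    exact ((differentiableAt_const _).sub
      ((differentiableAt_const _).mul differentiableAt_id)).sub
      ((differentiableAt_const _).div differentiableAt_id hz0)
  have h3 : DifferentiableAt ℂ (fun z : ℂ => (z - 1) ^ (-((n₂ : ℤ) + N))) z :=
    DifferentiableAt.zpow (differentiableAt_id.sub (differentiableAt_const 1))
      (Or.inl (sub_ne_zero.mpr hz1))
  have h4 : DifferentiableAt ℂ (fun z : ℂ => z ^ (x₂ + (n₂ : ℤ) - N)) z :=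
    differentiableAt_zpow.mpr (Or.inl hz0)
  have h6 : DifferentiableAt ℂ (fun z : ℂ => 2 * z - 1) z :=
    ((differentiableAt_const _).mul differentiableAt_id).sub (differentiableAt_const 1)
  have h7 : DifferentiableAt ℂ (fun z : ℂ => (w - z) * (w - 1 + z)) z :=
    ((differentiableAt_const _).sub differentiableAt_id).mul
      ((differentiableAt_const _).add differentiableAt_id)
  have h7ne : (w - z) * (w - 1 + z) ≠ 0 := mul_ne_zero (sub_ne_zero.mpr hwz) hw1z
  exact DifferentiableAt.div
    ((((((hexp.mul (differentiableAt_const _)).mul h3).mul h4).mul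
      (differentiableAt_const _)).mul h6)) h7 h7ne

lemma Phi_cont (a₁ b₁ a₂ b₂ : ℝ) (n₁ n₂ N : ℕ) (x₁ x₂ : ℤ) {r' ρ' : ℝ}
    (h1 : 0 < ρ') (h2 : 0 < r') (h3 : r' < 1/2) (h4 : ρ' < r') (h5 : ρ' < 1/2) :
    Continuous fun p : ℝ × ℝ =>
      Phi a₁ b₁ a₂ b₂ n₁ n₂ N x₁ x₂ (circleMap 1 r' p.1) (circleMap 0 ρ' p.2) := by
  have hZn : ∀ θ : ℝ, ‖circleMap 1 r' θ - 1‖ = r' := by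
    intro θ
    rw [circleMap_sub_center, norm_circleMap_zero, abs_of_pos h2]
  have hWn : ∀ θ : ℝ, ‖circleMap 0 ρ' θ‖ = ρ' := by
    intro θ
    rw [norm_circleMap_zero, abs_of_pos h1]
  have hZlb : ∀ θ : ℝ, 1 - r' ≤ ‖circleMap 1 r' θ‖ := by
    intro θ
    have := norm_sub_norm_le (1:ℂ) (circleMap 1 r' θ)
    rw [norm_one, norm_sub_rev, hZn θ] at this
    linarith
  have hZ1 : ∀ θ : ℝ, circleMap 1 r' θ ≠ 1 := fun θ => circleMap_ne_center h2.ne'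
  have hZ0 : ∀ θ : ℝ, circleMap 1 r' θ ≠ 0 := by
    intro θ h
    have := hZlb θ
    rw [h, norm_zero] at this
    linarith
  have hW0 : ∀ θ : ℝ, circleMap 0 ρ' θ ≠ 0 := fun θ => circleMap_ne_center h1.ne'
  have hWZ : ∀ p : ℝ × ℝ, circleMap 0 ρ' p.2 - circleMap 1 r' p.1 ≠ 0 := by
    intro p h
    have h6 : circleMap 0 ρ' p.2 = circleMap 1 r' p.1 := by linear_combination h
    have := hZlb p.1
    rw [← h6, hWn p.2] at this
    linarith
  have hW1Z : ∀ p : ℝ × ℝ, circleMap 0 ρ' p.2 - 1 + circleMap 1 r' p.1 ≠ 0 := by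
    intro p h
    have h6 : circleMap 0 ρ' p.2 = 1 - circleMap 1 r' p.1 := by linear_combination h
    have h7 := hZn p.1
    rw [show circleMap 1 r' p.1 - 1 = -(1 - circleMap 1 r' p.1) by ring, norm_neg, ← h6,
      hWn p.2] at h7
    linarith
  have hZc : Continuous fun p : ℝ × ℝ => circleMap 1 r' p.1 :=
    (continuous_circleMap 1 r').comp continuous_fst
  have hWc : Continuous fun p : ℝ × ℝ => circleMap 0 ρ' p.2 :=
    (continuous_circleMap 0 ρ').comp continuous_snd
  unfold Phi
  refine Continuous.div ?_ ?_ ?_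
  · refine Continuous.mul (Continuous.mul (Continuous.mul (Continuous.mul (Continuous.mul
      ?_ ?_) ?_) ?_) ?_) ?_
    · refine Continuous.cexp ?_
      exact (((continuous_const.mul hWc).add (continuous_const.div hWc (fun p => hW0 p.2))).sub
        (continuous_const.mul hZc)).sub (continuous_const.div hZc (fun p => hZ0 p.1))
    · exact (hWc.sub continuous_const).pow _
    · exact Continuous.zpow₀ (hZc.sub continuous_const) _
        (fun p => Or.inl (sub_ne_zero.mpr (hZ1 p.1)))
    · exact Continuous.zpow₀ hZc _ (fun p => Or.inl (hZ0 p.1))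
    · exact Continuous.zpow₀ hWc _ (fun p => Or.inl (hW0 p.2))
    · exact (continuous_const.mul hZc).sub continuous_const
  · exact (hWc.sub hZc).mul ((hWc.sub continuous_const).add hZc)
  · exact fun p => mul_ne_zero (hWZ p) (hW1Z p)


set_option maxHeartbeats 2000000 in
lemma KN_bd (n₁ n₂ : ℕ) (a₁ b₁ a₂ b₂ : ℝ) (ℓ : ℤ) :
    ∃ C > (0:ℝ), ∀ r ρ : ℝ, 0 < r → r < 1/2 → 0 < ρ → ρ < min r (1 - r) →
      ∀ N : ℕ, ∀ x₁ x₂ : ℤ, x₁ ≤ ℓ → x₂ ≤ ℓ →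
      ‖KN n₁ n₂ a₁ b₁ a₂ b₂ r ρ N x₁ x₂‖ ≤
        C * Real.exp (((x₁:ℝ) - x₂)/2) * Real.exp (((x₁:ℝ) + x₂)/4) * (15/16)^N := by
  set t : ℝ := Real.exp (-(1/4)) with ht
  set s : ℝ := 1 - t with hs
  have htlb : (3/4:ℝ) ≤ t := exp_m14_lb
  have htub : t ≤ 4/5 := exp_m14_ub
  have hslb : (1/5:ℝ) ≤ s := by rw [hs]; linarith
  have hsub : s ≤ 1/4 := by rw [hs]; linarith
  have hs0 : (0:ℝ) < s := by linarith
  set E₂ : ℝ := |a₁| + |b₁| * 8 + 2*|a₂| + 2*|b₂| with hE₂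
  set c₁ : ℝ := |(ℓ:ℝ)| + ((n₁:ℝ)+n₂) + |(ℓ:ℝ)|/4 + ((n₁:ℝ)+n₂)/4 + 1 with hc₁
  set c₃ : ℝ := 3*((n₁:ℝ)+1) + 3*|(ℓ:ℝ)| with hc₃
  refine ⟨Real.exp (E₂ + c₁ + c₃) * (9/8)^n₁ * 5^n₂ * (256/3), by positivity, ?_⟩
  intro r ρ hr hr2 hρ hρm N x₁ x₂ hx₁ hx₂
  have hρr : ρ < r := lt_of_lt_of_le hρm (min_le_left _ _)
  have hρ1r : ρ < 1 - r := lt_of_lt_of_le hρm (min_le_right _ _)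
  set ρ' : ℝ := min ρ (1/8) with hρ'def
  have hρ'0 : 0 < ρ' := lt_min hρ (by norm_num)
  have hρ'8 : ρ' ≤ 1/8 := min_le_right _ _
  have hρ'ρ : ρ' ≤ ρ := min_le_left _ _
  have hx₁' : (x₁:ℝ) ≤ |(ℓ:ℝ)| := le_trans (by exact_mod_cast hx₁) (le_abs_self _)
  have hx₂' : (x₂:ℝ) ≤ |(ℓ:ℝ)| := le_trans (by exact_mod_cast hx₂) (le_abs_self _)
  have habs : (0:ℝ) ≤ |(ℓ:ℝ)| := abs_nonneg _
  -- step A : shrink the inner contour, at outer radius r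
  have stepA : ∀ z ∈ Metric.sphere (1:ℂ) r,
      (∮ w in C(0, ρ), Phi a₁ b₁ a₂ b₂ n₁ n₂ N x₁ x₂ z w)
        = ∮ w in C(0, ρ'), Phi a₁ b₁ a₂ b₂ n₁ n₂ N x₁ x₂ z w := by
    intro z hz
    rw [Metric.mem_sphere, dist_eq_norm] at hz
    have hzlb : 1 - r ≤ ‖z‖ := by
      have := norm_sub_norm_le (1:ℂ) z
      rw [norm_one, norm_sub_rev, hz] at this
      linarith
    refine deform hρ'0 hρ (fun w hmin hmax => ?_)
    rw [dist_zero_right, min_eq_left hρ'ρ] at hmin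
    rw [dist_zero_right, max_eq_right hρ'ρ] at hmax
    have hw0 : w ≠ 0 := by
      intro h; rw [h, norm_zero] at hmin; linarith
    have hwz : w ≠ z := by
      intro h; rw [h] at hmax; linarith
    have hw1z : w - 1 + z ≠ 0 := by
      intro h
      have h6 : w = 1 - z := by linear_combination h
      rw [h6, norm_sub_rev, hz] at hmax
      linarith
    exact Phi_diffW a₁ b₁ a₂ b₂ n₁ n₂ N x₁ x₂ z w hw0 hwz hw1z
  -- step B : move the outer contour from r to s, at inner radius ρ'
  have stepB : ∀ w ∈ Metric.sphere (0:ℂ) ρ',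
      (∮ z in C(1, r), Phi a₁ b₁ a₂ b₂ n₁ n₂ N x₁ x₂ z w)
        = ∮ z in C(1, s), Phi a₁ b₁ a₂ b₂ n₁ n₂ N x₁ x₂ z w := by
    intro w hw
    rw [mem_sphere_zero_iff_norm] at hw
    refine deform hs0 hr (fun z hmin hmax => ?_)
    rw [dist_eq_norm] at hmin hmax
    have hminpos : (0:ℝ) < min s r := lt_min hs0 hr
    have hmaxlt : max s r < 1/2 := max_lt (by linarith) hr2
    have hρ'min : ρ' < min s r := lt_min (by linarith) (by linarith)
    have hz1 : z ≠ 1 := by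
      intro h; rw [h, sub_self, norm_zero] at hmin; linarith
    have hzlb : 1/2 < ‖z‖ := by
      have := norm_sub_norm_le (1:ℂ) z
      rw [norm_one, norm_sub_rev] at this
      linarith
    have hz0 : z ≠ 0 := by
      intro h; rw [h, norm_zero] at hzlb; linarith
    have hwz : w ≠ z := by
      intro h; rw [h] at hw; linarith
    have hw1z : w - 1 + z ≠ 0 := by
      intro h
      have h6 : w = 1 - z := by linear_combination h
      rw [h6, norm_sub_rev] at hw
      linarith
    exact Phi_diffZ a₁ b₁ a₂ b₂ n₁ n₂ N x₁ x₂ z w hz0 hz1 hwz hw1z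
  -- step C : shrink the inner contour from ρ' to 1/8, at outer radius s
  have stepC : ∀ z ∈ Metric.sphere (1:ℂ) s,
      (∮ w in C(0, ρ'), Phi a₁ b₁ a₂ b₂ n₁ n₂ N x₁ x₂ z w)
        = ∮ w in C(0, (1/8:ℝ)), Phi a₁ b₁ a₂ b₂ n₁ n₂ N x₁ x₂ z w := by
    intro z hz
    rw [Metric.mem_sphere, dist_eq_norm] at hz
    have hzlb : t ≤ ‖z‖ := by
      have := norm_sub_norm_le (1:ℂ) z
      rw [norm_one, norm_sub_rev, hz] at this
      rw [hs] at this
      linarith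
    refine deform (by norm_num : (0:ℝ) < 1/8) hρ'0 (fun w hmin hmax => ?_)
    rw [dist_zero_right, min_eq_right hρ'8] at hmin
    rw [dist_zero_right, max_eq_left hρ'8] at hmax
    have hw0 : w ≠ 0 := by
      intro h; rw [h, norm_zero] at hmin; linarith
    have hwz : w ≠ z := by
      intro h; rw [h] at hmax; linarith
    have hw1z : w - 1 + z ≠ 0 := by
      intro h
      have h6 : w = 1 - z := by linear_combination h
      rw [h6, norm_sub_rev, hz] at hmax
      linarith
    exact Phi_diffW a₁ b₁ a₂ b₂ n₁ n₂ N x₁ x₂ z w hw0 hwz hw1z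
  have hcont_r : Continuous fun p : ℝ × ℝ =>
      Phi a₁ b₁ a₂ b₂ n₁ n₂ N x₁ x₂ (circleMap 1 r p.1) (circleMap 0 ρ' p.2) :=
    Phi_cont a₁ b₁ a₂ b₂ n₁ n₂ N x₁ x₂ hρ'0 hr hr2 (by linarith) (by linarith)
  have hcont_s : Continuous fun p : ℝ × ℝ =>
      Phi a₁ b₁ a₂ b₂ n₁ n₂ N x₁ x₂ (circleMap 1 s p.1) (circleMap 0 ρ' p.2) :=
    Phi_cont a₁ b₁ a₂ b₂ n₁ n₂ N x₁ x₂ hρ'0 hs0 (by linarith) (by linarith) (by linarith)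
  -- the full chain of deformations
  have main_eq : KN n₁ n₂ a₁ b₁ a₂ b₂ r ρ N x₁ x₂ =
      (2 * (Real.pi : ℂ) * Complex.I)⁻¹ * ∮ z in C(1, s),
        ((2 * (Real.pi : ℂ) * Complex.I)⁻¹ *
          ∮ w in C(0, (1/8:ℝ)), Phi a₁ b₁ a₂ b₂ n₁ n₂ N x₁ x₂ z w) := by
    have e0 : KN n₁ n₂ a₁ b₁ a₂ b₂ r ρ N x₁ x₂ =
        (2 * (Real.pi : ℂ) * Complex.I)⁻¹ * ∮ z in C(1, r),
          ((2 * (Real.pi : ℂ) * Complex.I)⁻¹ *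
            ∮ w in C(0, ρ), Phi a₁ b₁ a₂ b₂ n₁ n₂ N x₁ x₂ z w) := rfl
    rw [e0]
    have e1 : (∮ z in C(1, r), ((2 * (Real.pi : ℂ) * Complex.I)⁻¹ *
          ∮ w in C(0, ρ), Phi a₁ b₁ a₂ b₂ n₁ n₂ N x₁ x₂ z w))
        = ∮ z in C(1, r), ((2 * (Real.pi : ℂ) * Complex.I)⁻¹ *
          ∮ w in C(0, ρ'), Phi a₁ b₁ a₂ b₂ n₁ n₂ N x₁ x₂ z w) :=
      circleIntegral.integral_congr hr.le (fun z hz => by rw [stepA z hz])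
    rw [e1, circleIntegral.integral_const_mul, circle_swap hcont_r]
    have e2 : (∮ w in C(0, ρ'), ∮ z in C(1, r), Phi a₁ b₁ a₂ b₂ n₁ n₂ N x₁ x₂ z w)
        = ∮ w in C(0, ρ'), ∮ z in C(1, s), Phi a₁ b₁ a₂ b₂ n₁ n₂ N x₁ x₂ z w :=
      circleIntegral.integral_congr hρ'0.le (fun w hw => stepB w hw)
    rw [e2, ← circle_swap hcont_s]
    have e3 : (∮ z in C(1, s), ∮ w in C(0, ρ'), Phi a₁ b₁ a₂ b₂ n₁ n₂ N x₁ x₂ z w)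
        = ∮ z in C(1, s), ∮ w in C(0, (1/8:ℝ)), Phi a₁ b₁ a₂ b₂ n₁ n₂ N x₁ x₂ z w :=
      circleIntegral.integral_congr hs0.le (fun z hz => stepC z hz)
    rw [e3, ← circleIntegral.integral_const_mul]
  -- the norm estimate on the final contours
  set M : ℝ := (Real.exp E₂ * (Real.exp (-(x₂:ℝ)/4 + c₁) * Real.exp (3*(x₁:ℝ)/4 + c₃)) *
      ((9/8:ℝ)^n₁ * 5^n₂ * 4 * (64/3))) * ((15:ℝ)/16)^N with hM_def
  have hM : ∀ z ∈ Metric.sphere (1:ℂ) s, ∀ w ∈ Metric.sphere (0:ℂ) (1/8:ℝ),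
      ‖Phi a₁ b₁ a₂ b₂ n₁ n₂ N x₁ x₂ z w‖ ≤ M := by
    intro z hz w hw
    rw [Metric.mem_sphere, dist_eq_norm] at hz
    rw [mem_sphere_zero_iff_norm] at hw
    have hzlb : t ≤ ‖z‖ := by
      have := norm_sub_norm_le (1:ℂ) z
      rw [norm_one, norm_sub_rev, hz] at this
      rw [hs] at this
      linarith
    have hzub : ‖z‖ ≤ 2 - t := by
      have := norm_sub_norm_le z (1:ℂ)
      rw [norm_one, hz, hs] at this
      linarith
    have hz_pos : (0:ℝ) < ‖z‖ := by linarith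
    have hw0 : w ≠ 0 := by
      intro h; rw [h, norm_zero] at hw; norm_num at hw
    -- factor bounds
    have hf1 : ‖Complex.exp ((a₁:ℂ) * w + (b₁:ℂ) / w - (a₂:ℂ) * z - (b₂:ℂ) / z)‖
        ≤ Real.exp E₂ := by
      rw [Complex.norm_exp]
      apply Real.exp_le_exp.mpr
      have hre := Complex.re_le_norm ((a₁:ℂ) * w + (b₁:ℂ) / w - (a₂:ℂ) * z - (b₂:ℂ) / z)
      have htri : ‖(a₁:ℂ) * w + (b₁:ℂ) / w - (a₂:ℂ) * z - (b₂:ℂ) / z‖ ≤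
          |a₁| * ‖w‖ + |b₁| / ‖w‖ + |a₂| * ‖z‖ + |b₂| / ‖z‖ := by
        calc ‖(a₁:ℂ) * w + (b₁:ℂ) / w - (a₂:ℂ) * z - (b₂:ℂ) / z‖
            ≤ ‖(a₁:ℂ) * w + (b₁:ℂ) / w - (a₂:ℂ) * z‖ + ‖(b₂:ℂ) / z‖ := norm_sub_le _ _
          _ ≤ ‖(a₁:ℂ) * w + (b₁:ℂ) / w‖ + ‖(a₂:ℂ) * z‖ + ‖(b₂:ℂ) / z‖ := by
              have := norm_sub_le ((a₁:ℂ) * w + (b₁:ℂ) / w) ((a₂:ℂ) * z)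
              linarith
          _ ≤ ‖(a₁:ℂ) * w‖ + ‖(b₁:ℂ) / w‖ + ‖(a₂:ℂ) * z‖ + ‖(b₂:ℂ) / z‖ := by
              have := norm_add_le ((a₁:ℂ) * w) ((b₁:ℂ) / w)
              linarith
          _ = |a₁| * ‖w‖ + |b₁| / ‖w‖ + |a₂| * ‖z‖ + |b₂| / ‖z‖ := by
              rw [norm_mul, norm_div, norm_mul, norm_div, Complex.norm_real,
                Complex.norm_real, Complex.norm_real, Complex.norm_real,
                Real.norm_eq_abs, Real.norm_eq_abs, Real.norm_eq_abs, Real.norm_eq_abs]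
      have h1 : |a₁| * ‖w‖ ≤ |a₁| := by
        rw [hw]; nlinarith [abs_nonneg a₁]
      have h2 : |b₁| / ‖w‖ = |b₁| * 8 := by
        rw [hw]; ring
      have h3 : |a₂| * ‖z‖ ≤ 2 * |a₂| := by
        nlinarith [mul_le_mul_of_nonneg_left (show ‖z‖ ≤ (2:ℝ) by linarith) (abs_nonneg a₂)]
      have h4 : |b₂| / ‖z‖ ≤ 2 * |b₂| := by
        rw [div_le_iff₀ hz_pos]
        nlinarith [mul_le_mul_of_nonneg_left (show (3/4:ℝ) ≤ ‖z‖ by linarith)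
          (mul_nonneg (by norm_num : (0:ℝ) ≤ 2) (abs_nonneg b₂)), abs_nonneg b₂]
      rw [hE₂]
      linarith
    have hf2 : ‖(w - 1) ^ (n₁ + N)‖ ≤ (9/8:ℝ) ^ (n₁ + N) := by
      rw [norm_pow]
      refine pow_le_pow_left₀ (norm_nonneg _) ?_ _
      have := norm_sub_le w 1
      rw [norm_one, hw] at this
      linarith
    have hf3 : ‖(z - 1) ^ (-((n₂:ℤ) + N))‖ ≤ (5:ℝ) ^ (n₂ + N) := by
      rw [norm_zpow, hz]
      have hsinv : s⁻¹ ≤ 5 := by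
        rw [show (5:ℝ) = (1/5:ℝ)⁻¹ by norm_num]
        exact inv_anti₀ (by norm_num) hslb
      calc s ^ (-((n₂:ℤ) + N)) = (s⁻¹) ^ (n₂ + N) := by
            rw [show (-((n₂:ℤ) + N)) = -((n₂ + N : ℕ) : ℤ) by push_cast; ring,
              zpow_neg, zpow_natCast, inv_pow]
        _ ≤ (5:ℝ) ^ (n₂ + N) := pow_le_pow_left₀ (inv_nonneg.mpr hs0.le) hsinv _
    have hf4 : ‖z ^ (x₂ + (n₂:ℤ) - N)‖ ≤
        Real.exp (-(x₂:ℝ)/4 + c₁) * ((4/3:ℝ)) ^ N := by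
      rw [norm_zpow, show (x₂ + (n₂:ℤ) - N) = (x₂ + (n₂:ℤ)) + (-(N:ℤ)) by ring,
        zpow_add₀ (ne_of_gt hz_pos)]
      have hp1 : ‖z‖ ^ (x₂ + (n₂:ℤ)) ≤ Real.exp (-(x₂:ℝ)/4 + c₁) := by
        rw [zpow_eq_exp hz_pos]
        apply Real.exp_le_exp.mpr
        have hlz_lb : -(1/4:ℝ) ≤ Real.log ‖z‖ := by
          have := Real.log_le_log (Real.exp_pos _) hzlb
          rw [Real.log_exp] at this
          linarith
        have hlz_ub : Real.log ‖z‖ ≤ 1 := by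
          have h2 : (2:ℝ) ≤ Real.exp 1 := by have := Real.add_one_le_exp (1:ℝ); linarith
          rw [Real.log_le_iff_le_exp hz_pos]
          linarith
        have hcast : ((x₂ + (n₂:ℤ) : ℤ) : ℝ) = (x₂:ℝ) + n₂ := by push_cast; ring
        rw [hcast]
        have hn1r : (0:ℝ) ≤ (n₁:ℝ) := Nat.cast_nonneg _
        have hn2r : (0:ℝ) ≤ (n₂:ℝ) := Nat.cast_nonneg _
        rcases le_or_gt 0 ((x₂:ℝ) + n₂) with hP | hP
        · have h5 := mul_le_mul_of_nonneg_left hlz_ub hP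
          rw [mul_one] at h5
          rw [hc₁]
          linarith
        · have h5 := mul_le_mul_of_nonpos_left hlz_lb hP.le
          rw [hc₁]
          linarith
      have hp2 : ‖z‖ ^ (-(N:ℤ)) ≤ ((4/3:ℝ)) ^ N := by
        rw [zpow_neg, zpow_natCast, ← inv_pow]
        refine pow_le_pow_left₀ (inv_nonneg.mpr hz_pos.le) ?_ _
        rw [show (4/3:ℝ) = (3/4:ℝ)⁻¹ by norm_num]
        exact inv_anti₀ (by norm_num) (by linarith)
      exact mul_le_mul hp1 hp2 (zpow_nonneg (norm_nonneg _) _) (Real.exp_nonneg _)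
    have hf5 : ‖w ^ (-(x₁ + (n₁:ℤ) - N + 1))‖ ≤
        ((1/8:ℝ)) ^ N * Real.exp (3*(x₁:ℝ)/4 + c₃) := by
      rw [norm_zpow, hw, show (-(x₁ + (n₁:ℤ) - N + 1)) = (N:ℤ) + (-(x₁ + (n₁:ℤ) + 1)) by ring,
        zpow_add₀ (by norm_num : (1/8:ℝ) ≠ 0), zpow_natCast]
      refine mul_le_mul_of_nonneg_left ?_ (by positivity)
      rw [zpow_eq_exp (by norm_num : (0:ℝ) < 1/8)]
      apply Real.exp_le_exp.mpr
      have hlog18 : Real.log (1/8:ℝ) = -Real.log 8 := by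
        rw [show (1/8:ℝ) = (8:ℝ)⁻¹ by norm_num, Real.log_inv]
      have hcast : ((-(x₁ + (n₁:ℤ) + 1) : ℤ) : ℝ) = -((x₁:ℝ) + n₁ + 1) := by push_cast; ring
      rw [hcast, hlog18]
      have hgoal : ((x₁:ℝ) + n₁ + 1) * Real.log 8 ≤ 3*(x₁:ℝ)/4 + c₃ := by
        have hn1r : (0:ℝ) ≤ (n₁:ℝ) := Nat.cast_nonneg _
        rcases le_or_gt 0 ((x₁:ℝ) + n₁ + 1) with hP | hP
        · have h5 := mul_le_mul_of_nonneg_left log8_ub hP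
          rw [hc₃]
          linarith
        · have h5 := mul_le_mul_of_nonpos_left log8_lb hP.le
          rw [hc₃]
          linarith
      linarith [hgoal]
    have hf6 : ‖2 * z - 1‖ ≤ 4 := by
      have h1 := norm_sub_le (2 * z) 1
      rw [norm_one, norm_mul] at h1
      have h2 : ‖(2:ℂ)‖ = 2 := by
        rw [Complex.norm_two]
      rw [h2] at h1
      linarith
    have hg1 : (5/8:ℝ) ≤ ‖w - z‖ := by
      have := norm_sub_norm_le z w
      rw [norm_sub_rev z w, hw] at this
      linarith
    have hg2 : (3/40:ℝ) ≤ ‖w - 1 + z‖ := by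
      have h6 : w - 1 + z = w - (1 - z) := by ring
      have h7 := norm_sub_norm_le (1 - z) w
      rw [norm_sub_rev (1-z) w, ← h6, norm_sub_rev, hz, hw] at h7
      linarith
    have hginv : (‖w - z‖ * ‖w - 1 + z‖)⁻¹ ≤ 64/3 := by
      rw [show (64/3:ℝ) = ((5/8:ℝ) * (3/40:ℝ))⁻¹ by norm_num]
      refine inv_anti₀ (by norm_num) ?_
      exact mul_le_mul hg1 hg2 (by norm_num) (norm_nonneg _)
    calc ‖Phi a₁ b₁ a₂ b₂ n₁ n₂ N x₁ x₂ z w‖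
        = ‖Complex.exp ((a₁:ℂ) * w + (b₁:ℂ) / w - (a₂:ℂ) * z - (b₂:ℂ) / z)‖ *
          ‖(w - 1) ^ (n₁ + N)‖ * ‖(z - 1) ^ (-((n₂:ℤ) + N))‖ *
          ‖z ^ (x₂ + (n₂:ℤ) - N)‖ * ‖w ^ (-(x₁ + (n₁:ℤ) - N + 1))‖ *
          ‖2 * z - 1‖ * (‖w - z‖ * ‖w - 1 + z‖)⁻¹ := by
          rw [Phi, norm_div, norm_mul, norm_mul, norm_mul, norm_mul, norm_mul, norm_mul,
            div_eq_mul_inv]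
      _ ≤ Real.exp E₂ * (9/8:ℝ)^(n₁+N) * (5:ℝ)^(n₂+N) *
          (Real.exp (-(x₂:ℝ)/4 + c₁) * (4/3:ℝ)^N) *
          ((1/8:ℝ)^N * Real.exp (3*(x₁:ℝ)/4 + c₃)) * 4 * (64/3) := by
          gcongr
      _ = M := by
          rw [hM_def, pow_add, pow_add,
            show ((15:ℝ)/16) = (9/8) * (5 * ((4/3) * (1/8))) by norm_num,
            mul_pow, mul_pow, mul_pow]
          ring
  -- assemble
  rw [main_eq]
  have houter : ∀ z ∈ Metric.sphere (1:ℂ) s,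
      ‖(2 * (Real.pi : ℂ) * Complex.I)⁻¹ *
        ∮ w in C(0, (1/8:ℝ)), Phi a₁ b₁ a₂ b₂ n₁ n₂ N x₁ x₂ z w‖ ≤ (1/8) * M :=
    fun z hz => norm_kernel_le (by norm_num) (hM z hz)
  refine (norm_kernel_le hs0.le houter).trans ?_
  have hMeq : M = (Real.exp (E₂ + c₁ + c₃) * (9/8:ℝ)^n₁ * 5^n₂ * (256/3)) *
      Real.exp (((x₁:ℝ) - x₂)/2) * Real.exp (((x₁:ℝ) + x₂)/4) * ((15:ℝ)/16)^N := by
    rw [hM_def]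
    have h9 : Real.exp E₂ * (Real.exp (-(x₂:ℝ)/4 + c₁) * Real.exp (3*(x₁:ℝ)/4 + c₃)) =
        Real.exp (E₂ + c₁ + c₃) * Real.exp (((x₁:ℝ) - x₂)/2) * Real.exp (((x₁:ℝ) + x₂)/4) := by
      rw [← Real.exp_add, ← Real.exp_add, ← Real.exp_add, ← Real.exp_add]
      congr 1
      ring
    rw [h9]
    ring
  have hM0 : 0 ≤ M := by rw [hM_def]; positivity
  calc s * (1/8 * M) ≤ 1 * (1 * M) := by
        refine mul_le_mul (by linarith) ?_ (by positivity) (by norm_num)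
        exact mul_le_mul (by norm_num) le_rfl hM0 (by norm_num)
    _ = M := by ring
    _ = Real.exp (E₂ + c₁ + c₃) * (9/8:ℝ)^n₁ * 5^n₂ * (256/3) *
        Real.exp (((x₁:ℝ) - x₂)/2) * Real.exp (((x₁:ℝ) + x₂)/4) * ((15:ℝ)/16)^N := hMeq
    _ = Real.exp (E₂ + c₁ + c₃) * (9/8:ℝ)^n₁ * 5^n₂ * (256/3) *
        Real.exp (((x₁:ℝ) - x₂)/2) * Real.exp (((x₁:ℝ) + x₂)/4) * ((15:ℝ)/16)^N := rfl


end Stmt12Helpers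

open Stmt12Helpers in
/-- uniform bounds on the three terms of the finite-`N`
flat-initial-condition kernel, with the `K^{(N)}` bound carrying a factor
`κ^N` for some `κ ∈ [0,1)`. -/
theorem stmt12 (n₁ n₂ : ℕ) (hn₁ : 1 ≤ n₁) (hn₂ : 1 ≤ n₂)
    (a₁ b₁ a₂ b₂ : ℝ) (ℓ : ℤ) :
    ∃ C > (0 : ℝ), ∃ κ : ℝ, 0 ≤ κ ∧ κ < 1 ∧
      ∀ ρ₀ r₁ r ρ : ℝ, 0 < ρ₀ → ρ₀ < 1 → 0 < r₁ → r₁ < 1 →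
        0 < r → r < 1/2 → 0 < ρ → ρ < min r (1 - r) →
        ∀ N : ℕ, 1 ≤ N → ∀ x₁ x₂ : ℤ, x₁ ≤ ℓ → x₂ ≤ ℓ →
          ‖K0 n₁ n₂ a₁ b₁ a₂ b₂ ρ₀ x₁ x₂‖
              ≤ C * Real.exp (((x₁ : ℝ) - x₂) / 2) * Real.exp (-|(x₂ : ℝ) - x₁| / 4) ∧
          ‖K1 n₁ n₂ a₁ b₁ a₂ b₂ r₁ x₁ x₂‖
              ≤ C * Real.exp (((x₁ : ℝ) - x₂) / 2) * Real.exp (((x₁ : ℝ) + x₂) / 4) ∧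
          ‖KN n₁ n₂ a₁ b₁ a₂ b₂ r ρ N x₁ x₂‖
              ≤ C * Real.exp (((x₁ : ℝ) - x₂) / 2) * Real.exp (((x₁ : ℝ) + x₂) / 4) * κ ^ N := by
  obtain ⟨C₀, hC₀, H₀⟩ := K0_bd n₁ n₂ a₁ b₁ a₂ b₂
  obtain ⟨C₁, hC₁, H₁⟩ := K1_bd n₁ n₂ a₁ b₁ a₂ b₂ ℓ
  obtain ⟨C₂, hC₂, H₂⟩ := KN_bd n₁ n₂ a₁ b₁ a₂ b₂ ℓ
  refine ⟨C₀ + C₁ + C₂, by positivity, 15/16, by norm_num, by norm_num, ?_⟩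
  intro ρ₀ r₁ r ρ hρ₀ hρ₀1 hr₁ hr₁1 hr hr2 hρ hρm N hN x₁ x₂ hx₁ hx₂
  have e1 : (0:ℝ) < Real.exp (((x₁:ℝ) - x₂)/2) := Real.exp_pos _
  have e2 : (0:ℝ) < Real.exp (-|(x₂:ℝ) - x₁|/4) := Real.exp_pos _
  have e3 : (0:ℝ) < Real.exp (((x₁:ℝ) + x₂)/4) := Real.exp_pos _
  have e4 : (0:ℝ) < ((15:ℝ)/16) ^ N := by positivity
  refine ⟨(H₀ ρ₀ hρ₀ hρ₀1 x₁ x₂).trans ?_, (H₁ r₁ hr₁ hr₁1 x₁ x₂ hx₁ hx₂).trans ?_,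
    (H₂ r ρ hr hr2 hρ hρm N x₁ x₂ hx₁ hx₂).trans ?_⟩
  · exact mul_le_mul_of_nonneg_right (mul_le_mul_of_nonneg_right (by linarith) e1.le) e2.le
  · exact mul_le_mul_of_nonneg_right (mul_le_mul_of_nonneg_right (by linarith) e1.le) e3.le
  · exact mul_le_mul_of_nonneg_right (mul_le_mul_of_nonneg_right
      (mul_le_mul_of_nonneg_right (by linarith) e1.le) e3.le) e4.le
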